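/- Let n ≥ 2, let R be a commutative ring, let a_1,…,a_{n−1} ∈ R and b ∈ R. Then in R[X] one has det(X·I − A'(b; a)) = (X + b + a_{n−1}) · X · ∏_{k=1}^{n−2} (X + a_k). -/

import Mathlib

open Polynomial Matrix

/-- The terminal-cycle compartmental matrix `A'(b; a)` for the directed path
`1 → 2 → ⋯ → n` together with the extra edge `n → n-1` with rate `b` and no
leaks.  Compartment `k` (for `1 ≤ k ≤ n`) is encoded as the index
`k - 1 : Fin n`.  The entries are `A'_{k,k} = -a_k` for `1 ≤ k ≤ n-1`;
`A'_{n,n} = -b`; `A'_{n-1,n} = b`; `A'_{k+1,k} = a_k` for `1 ≤ k ≤ n-1`;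
all other entries `0`. -/
def termCycle {R : Type*} [CommRing R] (n : ℕ) (b : R) (a : ℕ → R) :
    Matrix (Fin n) (Fin n) R :=
  Matrix.of fun u v =>
    if u = v then
      (if (u : ℕ) + 1 = n then -b else -a ((u : ℕ) + 1))
    else if (u : ℕ) = (v : ℕ) + 1 then a ((v : ℕ) + 1)
    else if (u : ℕ) + 2 = n ∧ (v : ℕ) + 1 = n then b
    else 0

lemma termCycle_submatrix {R : Type*} [CommRing R] (n : ℕ) (hn : 2 ≤ n)
    (b : R) (a : ℕ → R) :
    (termCycle (n + 1) b a).submatrix Fin.succ Fin.succ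
      = termCycle n b (fun k => a (k + 1)) := by
  ext i j
  simp only [Matrix.submatrix_apply, termCycle, Matrix.of_apply, Fin.val_succ, Fin.succ_inj]
  split_ifs with h1 h2 h3 h4 h5 h6 h7 <;> first | rfl | omega

lemma charmatrix_submatrix_succ {R : Type*} [CommRing R] {n : ℕ}
    (A : Matrix (Fin (n + 1)) (Fin (n + 1)) R) :
    (charmatrix A).submatrix Fin.succ Fin.succ
      = charmatrix (A.submatrix Fin.succ Fin.succ) := by
  ext i j
  by_cases h : i = j
  · subst h
    simp [charmatrix_apply_eq]
  · rw [Matrix.submatrix_apply, charmatrix_apply_ne _ _ _ (fun hh => h (Fin.succ_inj.mp hh)),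
      charmatrix_apply_ne _ _ _ h, Matrix.submatrix_apply]

/-- Theorem (LHS of the input-output equation of the terminal-cycle model):
`det(X·I − A'(b; a)) = (X + b + a_{n−1}) · X · ∏_{k=1}^{n−2} (X + a_k)`. -/
theorem det_charmatrix_termCycle {R : Type*} [CommRing R] (n : ℕ) (hn : 2 ≤ n)
    (a : ℕ → R) (b : R) :
    (charmatrix (termCycle n b a)).det =
      (X + C b + C (a (n - 1))) * X *
        ∏ k ∈ Finset.Icc 1 (n - 2), (X + C (a k)) := by
  induction n, hn using Nat.le_induction generalizing a b with
  | base =>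
    rw [show (2 : ℕ) - 2 = 0 from rfl, Finset.Icc_eq_empty (by norm_num), Finset.prod_empty,
      Matrix.det_fin_two]
    rw [charmatrix_apply_eq, charmatrix_apply_eq,
      charmatrix_apply_ne _ _ _ (by decide), charmatrix_apply_ne _ _ _ (by decide)]
    simp only [termCycle, Matrix.of_apply]
    norm_num
    ring
  | succ n hn ih =>
    rw [Matrix.det_succ_row_zero]
    rw [Finset.sum_eq_single 0]
    · rw [Fin.succAbove_zero, charmatrix_submatrix_succ, termCycle_submatrix n hn,
        ih (fun k => a (k + 1)) b]
      have e00 : termCycle (n + 1) b a 0 0 = -a 1 := by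
        simp only [termCycle, Matrix.of_apply, Fin.val_zero]
        split_ifs <;> first | rfl | omega | simp_all
      have h00 : charmatrix (termCycle (n + 1) b a) 0 0 = X + C (a 1) := by
        rw [charmatrix_apply_eq, e00, map_neg, sub_neg_eq_add]
      rw [h00]
      have h1 : n - 1 + 1 = n := by omega
      have h2 : n + 1 - 1 = n := by omega
      have h3 : n + 1 - 2 = n - 1 := by omega
      rw [h1, h2, h3]
      have h4 : Finset.Icc 1 (n - 1) = insert 1 (Finset.Icc 2 (n - 1)) := by
        ext x
        simp only [Finset.mem_Icc, Finset.mem_insert]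
        omega
      have h5 : ∏ k ∈ Finset.Icc 1 (n - 2), (X + C (a (k + 1)))
          = ∏ k ∈ Finset.Icc 2 (n - 1), (X + C (a k)) := by
        rw [show Finset.Icc 2 (n-1) = (Finset.Icc 1 (n-2)).map (addRightEmbedding 1) by
          rw [Finset.map_add_right_Icc]; congr 1 <;> omega]
        rw [Finset.prod_map]
        rfl
      rw [h4, Finset.prod_insert (by simp), h5]
      simp only [Fin.val_zero, pow_zero, one_mul]
      ring
    · intro j hj hj0
      have : charmatrix (termCycle (n + 1) b a) 0 j = 0 := by
        rw [charmatrix_apply_ne _ _ _ (Ne.symm hj0)]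
        have : termCycle (n + 1) b a 0 j = 0 := by
          simp only [termCycle, Matrix.of_apply, Fin.val_zero]
          split_ifs <;> first | rfl | omega | simp_all
        rw [this, map_zero, neg_zero]
      rw [this]
      ring
    · simp
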